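/- Define a relation on strings over {a,b,c,d} as the least unary predicate Ans on words generated by: R₂(x) holds iff x = w·a·w for some nonempty w ∈ {c,d}⁺; R₁(x) holds if x = a·y·c and R₁(y), or x = b·y·b and R₂(y); Ans holds of x iff R₁(x). Then Ans(x) holds if and only if x = aᶻ·b·w·a·w·b·cᶻ for some z ∈ ℕ and w ∈ {c,d}⁺. -/

import Mathlib

inductive ABCD : Type
  | a : ABCD
  | b : ABCD
  | c : ABCD
  | d : ABCD

/-- `R₂ x` : `x = w·a·w` for some nonempty `w ∈ {c,d}⁺`. -/
def R2 (x : List ABCD) : Prop :=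
  ∃ w : List ABCD, w ≠ [] ∧ (∀ ch ∈ w, ch = ABCD.c ∨ ch = ABCD.d) ∧
    x = w ++ [ABCD.a] ++ w

/-- `R₁` : least predicate with `R₁(b·y·b)` when `R₂ y`, and `R₁(a·y·c)` when `R₁ y`. -/
inductive R1 : List ABCD → Prop
  | base {y : List ABCD} : R2 y → R1 (ABCD.b :: y ++ [ABCD.b])
  | step {y : List ABCD} : R1 y → R1 (ABCD.a :: y ++ [ABCD.c])

theorem drx_constraint_program_language (x : List ABCD) :
    R1 x ↔ ∃ (z : ℕ) (w : List ABCD), w ≠ [] ∧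
      (∀ ch ∈ w, ch = ABCD.c ∨ ch = ABCD.d) ∧
      x = List.replicate z ABCD.a ++ [ABCD.b] ++ w ++ [ABCD.a] ++ w ++ [ABCD.b] ++
        List.replicate z ABCD.c := by
  constructor
  · intro h
    induction h with
    | base h =>
      obtain ⟨w, hw, hcd, rfl⟩ := h
      exact ⟨0, w, hw, hcd, by simp⟩
    | step h ih =>
      obtain ⟨z, w, hw, hcd, rfl⟩ := ih
      refine ⟨z + 1, w, hw, hcd, ?_⟩
      have e : List.replicate z ABCD.c ++ [ABCD.c] = ABCD.c :: List.replicate z ABCD.c :=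
        (List.replicate_succ' (n := z) (a := ABCD.c)).symm.trans (List.replicate_succ (a := ABCD.c) (n := z))
      simp [List.replicate_succ, e]
  · rintro ⟨z, w, hw, hcd, rfl⟩
    induction z with
    | zero =>
      simpa using R1.base (y := w ++ [ABCD.a] ++ w) ⟨w, hw, hcd, rfl⟩
    | succ n ih =>
      have := R1.step ih
      have e : List.replicate n ABCD.c ++ [ABCD.c] = ABCD.c :: List.replicate n ABCD.c :=
        (List.replicate_succ' (n := n) (a := ABCD.c)).symm.trans (List.replicate_succ (a := ABCD.c) (n := n))
      simpa [List.replicate_succ, e] using this
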